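/- Let X be a set, let k ∈ ℕ, and let f₁,…,f_k be real-valued functions on X. Then every finitely supported probability measure P on X can be written as a finite convex combination P = Σ_{j=1}^{m} λⱼ·Pⱼ (λⱼ ≥ 0, Σλⱼ = 1) of finitely supported probability measures Pⱼ, each concentrated on at most k + 1 of the support points of P and each satisfying ∫ fᵢ dPⱼ = ∫ fᵢ dP for every i ∈ {1,…,k}. -/

import Mathlib

lemma aux_sum_eq {X : Type*} (Q : X →₀ ℝ) {S : Finset X} (h : Q.support ⊆ S) (c : X → ℝ) :
    Q.sum (fun x p => p * c x) = ∑ x ∈ S, Q x * c x :=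
  Finsupp.sum_of_support_subset Q h _ (fun i _ => by simp)

lemma aux_sum_eq' {X : Type*} (Q : X →₀ ℝ) {S : Finset X} (h : Q.support ⊆ S) :
    Q.sum (fun _ p => p) = ∑ x ∈ S, Q x :=
  Finsupp.sum_of_support_subset Q h _ (fun i _ => rfl)

lemma aux_kernel_vec {ι : Type*} [Fintype ι] {r : ℕ} (g : Fin r → ι → ℝ)
    (h : r < Fintype.card ι) : ∃ v : ι → ℝ, v ≠ 0 ∧ ∀ i, ∑ x, v x * g i x = 0 := by
  let L : (ι → ℝ) →ₗ[ℝ] (Fin r → ℝ) :=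
    { toFun := fun v i => ∑ x, v x * g i x
      map_add' := by intro u v; funext i; simp [add_mul, Finset.sum_add_distrib]
      map_smul' := by intro c v; funext i; simp [Finset.mul_sum, mul_assoc] }
  have hni : ¬ Function.Injective L := by
    intro hinj
    have := LinearMap.finrank_le_finrank_of_injective hinj
    simp [Module.finrank_fintype_fun_eq_card] at this
    omega
  rw [← LinearMap.ker_eq_bot] at hni
  obtain ⟨v, hvmem, hv0⟩ := Submodule.exists_mem_ne_zero_of_ne_bot hni
  exact ⟨v, hv0, fun i => congrFun (LinearMap.mem_ker.mp hvmem) i⟩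

-- step: existence of a kernel direction w supported in P.support with
-- sum 0, integral 0, and both a positive and a negative value.
lemma aux_direction {X : Type*} {k : ℕ} (f : Fin k → X → ℝ) (P : X →₀ ℝ)
    (hcard : k + 1 < P.support.card) :
    ∃ w : X →₀ ℝ, w.support ⊆ P.support ∧
      (∑ x ∈ P.support, w x) = 0 ∧
      (∀ i, ∑ x ∈ P.support, w x * f i x = 0) ∧
      (∃ x, 0 < w x) ∧ (∃ x, w x < 0) := by
  classical
  set S := P.support with hS
  have hcard' : k + 1 < Fintype.card ↥S := by simpa [Fintype.card_coe] using hcard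
  obtain ⟨v, hv0, hvker⟩ :=
    aux_kernel_vec (Fin.cons (fun _ => (1:ℝ)) (fun i (x : ↥S) => f i x.1)) hcard'
  set w : X →₀ ℝ := Finsupp.onFinset S
    (fun x => if h : x ∈ S then v ⟨x, h⟩ else 0)
    (fun x hx => by by_contra h; simp [h] at hx) with hw
  have hwapp : ∀ (x : ↥S), w x.1 = v x := by
    intro x; simp [hw, Finsupp.onFinset_apply, x.2]
  have hwsub : w.support ⊆ S := Finsupp.support_onFinset_subset
  have hsum0 : (∑ x ∈ S, w x) = 0 := by
    have := hvker 0
    simp only [Fin.cons_zero, mul_one] at this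
    rw [← this]
    rw [← Finset.sum_attach S (fun x => w x)]
    exact Finset.sum_congr rfl (fun x _ => hwapp x)
  have hint0 : ∀ i, ∑ x ∈ S, w x * f i x = 0 := by
    intro i
    have := hvker i.succ
    simp only [Fin.cons_succ] at this
    rw [← this, ← Finset.sum_attach S (fun x => w x * f i x)]
    exact Finset.sum_congr rfl (fun x _ => by rw [hwapp x])
  have hwne : w ≠ 0 := by
    intro h
    apply hv0
    funext x
    have := hwapp x
    rw [h] at this
    simpa using this.symm
  have hex : ∃ x, w x ≠ 0 := by
    by_contra h
    push_neg at h
    exact hwne (Finsupp.ext (fun x => h x))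
  have hpos : ∃ x, 0 < w x := by
    by_contra h
    push_neg at h
    have : ∀ x ∈ S, w x = 0 := by
      intro x hx
      have := Finset.sum_eq_zero_iff_of_nonpos (fun x _ => h x) |>.mp hsum0
      exact this x hx
    obtain ⟨x, hx⟩ := hex
    exact hx (this x (hwsub (Finsupp.mem_support_iff.mpr hx)))
  have hneg : ∃ x, w x < 0 := by
    by_contra h
    push_neg at h
    have : ∀ x ∈ S, w x = 0 := by
      intro x hx
      have := Finset.sum_eq_zero_iff_of_nonneg (fun x _ => h x) |>.mp hsum0
      exact this x hx
    obtain ⟨x, hx⟩ := hex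
    exact hx (this x (hwsub (Finsupp.mem_support_iff.mpr hx)))
  exact ⟨w, hwsub, hsum0, hint0, hpos, hneg⟩

lemma aux_shrink {X : Type*} (P w : X →₀ ℝ) (hpos : ∀ x, 0 ≤ P x)
    (hws : w.support ⊆ P.support) (hneg : ∃ x, w x < 0) :
    ∃ t : ℝ, 0 < t ∧ (∀ x, 0 ≤ P x + t * w x) ∧
      (∃ x₀ ∈ P.support, P x₀ + t * w x₀ = 0) := by
  classical
  set T : Finset X := P.support.filter (fun x => w x < 0) with hT
  have hTne : T.Nonempty := by
    obtain ⟨x, hx⟩ := hneg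
    exact ⟨x, Finset.mem_filter.mpr ⟨hws (Finsupp.mem_support_iff.mpr (ne_of_lt hx)), hx⟩⟩
  obtain ⟨x₀, hx₀T, hx₀min⟩ := Finset.exists_min_image T (fun x => P x / (-w x)) hTne
  obtain ⟨hx₀S, hx₀w⟩ := Finset.mem_filter.mp hx₀T
  have hPx₀ : 0 < P x₀ := lt_of_le_of_ne (hpos x₀) (Ne.symm (Finsupp.mem_support_iff.mp hx₀S))
  set t : ℝ := P x₀ / (-w x₀) with ht
  have htpos : 0 < t := div_pos hPx₀ (by linarith)
  refine ⟨t, htpos, ?_, x₀, hx₀S, ?_⟩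
  · intro x
    rcases le_or_gt 0 (w x) with hwx | hwx
    · have := hpos x; nlinarith
    · have hxT : x ∈ T := Finset.mem_filter.mpr
        ⟨hws (Finsupp.mem_support_iff.mpr (ne_of_lt hwx)), hwx⟩
      have h2 : t ≤ P x / (-w x) := hx₀min x hxT
      rw [le_div_iff₀ (by linarith : (0:ℝ) < -w x)] at h2
      linarith
  · have hw0 : w x₀ ≠ 0 := by linarith
    have : P x₀ + P x₀ / (-w x₀) * w x₀ = 0 := by
      rw [div_mul_eq_mul_div, mul_div_assoc, div_neg, div_self hw0]; ring
    simpa [ht] using this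

lemma aux_split {X : Type*} {k : ℕ} (f : Fin k → X → ℝ) (P : X →₀ ℝ)
    (hpos : ∀ x, 0 ≤ P x) (hsum : P.sum (fun _ p => p) = 1)
    (hcard : k + 1 < P.support.card) :
    ∃ (a b : ℝ) (Q₁ Q₂ : X →₀ ℝ), 0 ≤ a ∧ 0 ≤ b ∧ a + b = 1 ∧
      P = a • Q₁ + b • Q₂ ∧
      ((∀ x, 0 ≤ Q₁ x) ∧ Q₁.sum (fun _ p => p) = 1 ∧ Q₁.support ⊂ P.support ∧
        (∀ i, Q₁.sum (fun x p => p * f i x) = P.sum (fun x p => p * f i x))) ∧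
      ((∀ x, 0 ≤ Q₂ x) ∧ Q₂.sum (fun _ p => p) = 1 ∧ Q₂.support ⊂ P.support ∧
        (∀ i, Q₂.sum (fun x p => p * f i x) = P.sum (fun x p => p * f i x))) := by
  classical
  obtain ⟨w, hwsub, hw0, hwint, hwpos, hwneg⟩ := aux_direction f P hcard
  -- direction -w for Q₁
  have hwsub' : (-w).support ⊆ P.support := by
    intro x hx; apply hwsub; simpa using hx
  obtain ⟨t₁, ht₁, hQ₁pos, x₁, hx₁S, hx₁zero⟩ := aux_shrink P (-w) hpos hwsub'
    (by obtain ⟨x, hx⟩ := hwpos; exact ⟨x, by simpa using hx⟩)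
  obtain ⟨t₂, ht₂, hQ₂pos, x₂, hx₂S, hx₂zero⟩ := aux_shrink P w hpos hwsub hwneg
  set Q₁ : X →₀ ℝ := P - t₁ • w with hQ₁
  set Q₂ : X →₀ ℝ := P + t₂ • w with hQ₂
  have hQ₁app : ∀ x, Q₁ x = P x + t₁ * (-w) x := by
    intro x; simp [hQ₁, sub_eq_add_neg, mul_comm]
  have hQ₂app : ∀ x, Q₂ x = P x + t₂ * w x := by
    intro x; simp [hQ₂]
  set a := t₂ / (t₁ + t₂) with ha
  set b := t₁ / (t₁ + t₂) with hb
  have hts : (0:ℝ) < t₁ + t₂ := by linarith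
  have hab : a + b = 1 := by rw [ha, hb, ← add_div, add_comm t₂ t₁, div_self (ne_of_gt hts)]
  have habm : a * t₁ = b * t₂ := by rw [ha, hb]; field_simp
  have hzero : ∀ x, x ∉ P.support → P x = 0 ∧ w x = 0 := by
    intro x hx
    refine ⟨Finsupp.notMem_support_iff.mp hx, ?_⟩
    by_contra h
    exact hx (hwsub (Finsupp.mem_support_iff.mpr h))
  have hQ₁sub : Q₁.support ⊆ P.support := by
    intro x hx
    by_contra h
    obtain ⟨hP, hw⟩ := hzero x h
    exact Finsupp.mem_support_iff.mp hx (by simp [hQ₁app x, hP, hw])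
  have hQ₂sub : Q₂.support ⊆ P.support := by
    intro x hx
    by_contra h
    obtain ⟨hP, hw⟩ := hzero x h
    exact Finsupp.mem_support_iff.mp hx (by simp [hQ₂app x, hP, hw])
  have hQ₁ssub : Q₁.support ⊂ P.support := by
    refine Finset.ssubset_iff_of_subset hQ₁sub |>.mpr ⟨x₁, hx₁S, ?_⟩
    rw [Finsupp.notMem_support_iff, hQ₁app x₁]
    exact hx₁zero
  have hQ₂ssub : Q₂.support ⊂ P.support := by
    refine Finset.ssubset_iff_of_subset hQ₂sub |>.mpr ⟨x₂, hx₂S, ?_⟩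
    rw [Finsupp.notMem_support_iff, hQ₂app x₂]
    exact hx₂zero
  have hPsum : ∑ x ∈ P.support, P x = 1 := by
    rw [← aux_sum_eq' P subset_rfl]; exact hsum
  have hQ₁sum : Q₁.sum (fun _ p => p) = 1 := by
    rw [aux_sum_eq' Q₁ hQ₁sub]
    have : ∀ x ∈ P.support, Q₁ x = P x - t₁ * w x := by
      intro x _; rw [hQ₁app x, Finsupp.neg_apply]; ring
    rw [Finset.sum_congr rfl this, Finset.sum_sub_distrib, hPsum, ← Finset.mul_sum, hw0]
    ring
  have hQ₂sum : Q₂.sum (fun _ p => p) = 1 := by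
    rw [aux_sum_eq' Q₂ hQ₂sub]
    have : ∀ x ∈ P.support, Q₂ x = P x + t₂ * w x := fun x _ => hQ₂app x
    rw [Finset.sum_congr rfl this, Finset.sum_add_distrib, hPsum, ← Finset.mul_sum, hw0]
    ring
  have hQ₁int : ∀ i, Q₁.sum (fun x p => p * f i x) = P.sum (fun x p => p * f i x) := by
    intro i
    rw [aux_sum_eq Q₁ hQ₁sub, aux_sum_eq P subset_rfl]
    have : ∀ x ∈ P.support, Q₁ x * f i x = P x * f i x - t₁ * (w x * f i x) := by
      intro x _; rw [hQ₁app x, Finsupp.neg_apply]; ring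
    rw [Finset.sum_congr rfl this, Finset.sum_sub_distrib, ← Finset.mul_sum, hwint i]
    ring
  have hQ₂int : ∀ i, Q₂.sum (fun x p => p * f i x) = P.sum (fun x p => p * f i x) := by
    intro i
    rw [aux_sum_eq Q₂ hQ₂sub, aux_sum_eq P subset_rfl]
    have : ∀ x ∈ P.support, Q₂ x * f i x = P x * f i x + t₂ * (w x * f i x) := by
      intro x _; rw [hQ₂app x]; ring
    rw [Finset.sum_congr rfl this, Finset.sum_add_distrib, ← Finset.mul_sum, hwint i]
    ring
  have hdecomp : P = a • Q₁ + b • Q₂ := by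
    ext x
    rw [Finsupp.add_apply, Finsupp.smul_apply, Finsupp.smul_apply, smul_eq_mul, smul_eq_mul,
      hQ₁app x, hQ₂app x, Finsupp.neg_apply]
    linear_combination (-(P x)) * hab + w x * habm
  exact ⟨a, b, Q₁, Q₂, le_of_lt (div_pos ht₂ hts), le_of_lt (div_pos ht₁ hts), hab, hdecomp,
    ⟨fun x => by rw [hQ₁app x]; exact hQ₁pos x, hQ₁sum, hQ₁ssub, hQ₁int⟩,
    ⟨fun x => by rw [hQ₂app x]; exact hQ₂pos x, hQ₂sum, hQ₂ssub, hQ₂int⟩⟩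

lemma aux_main {X : Type*} (k : ℕ) (f : Fin k → X → ℝ) :
    ∀ (n : ℕ) (P : X →₀ ℝ), P.support.card ≤ n → (∀ x, 0 ≤ P x) →
      P.sum (fun _ p => p) = 1 →
    ∃ (m : ℕ) (lam : Fin m → ℝ) (Pj : Fin m → (X →₀ ℝ)),
      (∀ j, 0 ≤ lam j) ∧ (∑ j, lam j) = 1 ∧ P = ∑ j, lam j • Pj j ∧
      ∀ j, (∀ x, 0 ≤ Pj j x) ∧ (Pj j).sum (fun _ p => p) = 1 ∧
        (Pj j).support ⊆ P.support ∧ (Pj j).support.card ≤ k + 1 ∧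
        ∀ i, (Pj j).sum (fun x p => p * f i x) = P.sum (fun x p => p * f i x) := by
  intro n
  induction n with
  | zero =>
    intro P hc hpos hsum
    exact ⟨1, fun _ => 1, fun _ => P, fun _ => zero_le_one, by simp, by simp,
      fun j => ⟨hpos, hsum, subset_rfl, le_trans hc (by omega), fun i => rfl⟩⟩
  | succ n ih =>
    intro P hc hpos hsum
    by_cases h : P.support.card ≤ k + 1
    · exact ⟨1, fun _ => 1, fun _ => P, fun _ => zero_le_one, by simp, by simp,
        fun j => ⟨hpos, hsum, subset_rfl, h, fun i => rfl⟩⟩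
    · push_neg at h
      obtain ⟨a, b, Q₁, Q₂, ha, hb, hab, hdecomp,
        ⟨hQ₁pos, hQ₁sum, hQ₁ssub, hQ₁int⟩, ⟨hQ₂pos, hQ₂sum, hQ₂ssub, hQ₂int⟩⟩ :=
        aux_split f P hpos hsum h
      have hc₁ : Q₁.support.card ≤ n := by
        have := Finset.card_lt_card hQ₁ssub; omega
      have hc₂ : Q₂.support.card ≤ n := by
        have := Finset.card_lt_card hQ₂ssub; omega
      obtain ⟨m₁, lam₁, Pj₁, hl₁, hls₁, hd₁, hp₁⟩ := ih Q₁ hc₁ hQ₁pos hQ₁sum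
      obtain ⟨m₂, lam₂, Pj₂, hl₂, hls₂, hd₂, hp₂⟩ := ih Q₂ hc₂ hQ₂pos hQ₂sum
      refine ⟨m₁ + m₂, Fin.append (fun j => a * lam₁ j) (fun j => b * lam₂ j),
        Fin.append Pj₁ Pj₂, ?_, ?_, ?_, ?_⟩
      · intro j
        refine Fin.addCases (fun j₁ => ?_) (fun j₂ => ?_) j
        · simpa using mul_nonneg ha (hl₁ j₁)
        · simpa using mul_nonneg hb (hl₂ j₂)
      · rw [Fin.sum_univ_add]
        simp only [Fin.append_left, Fin.append_right]
        rw [← Finset.mul_sum, ← Finset.mul_sum, hls₁, hls₂]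
        simpa using hab
      · rw [Fin.sum_univ_add]
        simp only [Fin.append_left, Fin.append_right]
        have e1 : ∑ j : Fin m₁, (a * lam₁ j) • Pj₁ j = a • ∑ j, lam₁ j • Pj₁ j := by
          rw [Finset.smul_sum]
          exact Finset.sum_congr rfl (fun j _ => by rw [smul_smul])
        have e2 : ∑ j : Fin m₂, (b * lam₂ j) • Pj₂ j = b • ∑ j, lam₂ j • Pj₂ j := by
          rw [Finset.smul_sum]
          exact Finset.sum_congr rfl (fun j _ => by rw [smul_smul])
        rw [e1, e2, ← hd₁, ← hd₂, hdecomp]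
      · intro j
        refine Fin.addCases (fun j₁ => ?_) (fun j₂ => ?_) j
        · obtain ⟨h1, h2, h3, h4, h5⟩ := hp₁ j₁
          simp only [Fin.append_left]
          exact ⟨h1, h2, h3.trans hQ₁ssub.subset, h4,
            fun i => (h5 i).trans (hQ₁int i)⟩
        · obtain ⟨h1, h2, h3, h4, h5⟩ := hp₂ j₂
          simp only [Fin.append_right]
          exact ⟨h1, h2, h3.trans hQ₂ssub.subset, h4,
            fun i => (h5 i).trans (hQ₂int i)⟩


/-- **Theorem (Hoeffding).** Let `X` be a set, `k ∈ ℕ`, and `f₁, …, f_k` real-valued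
functions on `X`. Every finitely supported probability measure `P` on `X` (modelled as a
finitely supported nonnegative weight function summing to `1`) is a finite convex
combination `P = Σⱼ λⱼ Pⱼ` of finitely supported probability measures `Pⱼ`, each
supported on at most `k + 1` of the support points of `P` and each satisfying
`∫ fᵢ dPⱼ = ∫ fᵢ dP` for every `i`. -/
theorem hoeffding_extreme_point_representation {X : Type*} (k : ℕ) (hk : 0 < k)
    (f : Fin k → X → ℝ) (P : X →₀ ℝ)
    (hpos : ∀ x, 0 ≤ P x) (hsum : P.sum (fun _ p => p) = 1) :
    ∃ (m : ℕ) (lam : Fin m → ℝ) (Pj : Fin m → (X →₀ ℝ)),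
      (∀ j, 0 ≤ lam j) ∧ (∑ j, lam j) = 1 ∧ P = ∑ j, lam j • Pj j ∧
      ∀ j, (∀ x, 0 ≤ Pj j x) ∧ (Pj j).sum (fun _ p => p) = 1 ∧
        (Pj j).support ⊆ P.support ∧ (Pj j).support.card ≤ k + 1 ∧
        ∀ i, (Pj j).sum (fun x p => p * f i x) = P.sum (fun x p => p * f i x) := by
  exact aux_main k f P.support.card P le_rfl hpos hsum
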